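/- If η ∈ C^k satisfies π_1(Dη) = 0 (all bigraded components of Dη of second degree ≥ 1 vanish), then the remaining component pr_{k+1,0}(Dη) = D_{2,-1}η_{k-1,1} + D_{1,0}η_{k,0} is a cocycle of the null subcomplex N_0, i.e., it is annihilated by both D_{0,1} and D_{1,0}. -/

import Mathlib

open DirectSum

set_option maxHeartbeats 1000000
set_option synthInstance.maxHeartbeats 1000000

variable {R M : Type} [CommRing R] [AddCommGroup M] [Module R M]

/-- Projection `π_q` of a bigraded module onto the part of second degree `≥ q`,
along the bigrading. -/
noncomputable def bproj (𝒞 : ℤ × ℤ → Submodule R M) [DirectSum.Decomposition 𝒞] (q : ℤ) :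
    M →ₗ[R] M :=
  (DirectSum.coeLinearMap 𝒞).comp <|
    (DFinsupp.filterLinearMap R (fun pq : ℤ × ℤ => 𝒞 pq) (fun pq => q ≤ pq.2)).comp
      (DirectSum.decomposeLinearEquiv 𝒞).toLinearMap

/-- The bihomogeneous component of bidegree `(p, q)` of an element. -/
noncomputable def bcomp (𝒞 : ℤ × ℤ → Submodule R M) [DirectSum.Decomposition 𝒞] (p q : ℤ)
    (x : M) : M :=
  (DirectSum.decompose 𝒞 x (p, q) : M)

/-- The total-degree-`k` part `C^k = ⊕_{p+q=k} C^{p,q}`. -/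
def bdeg (𝒞 : ℤ × ℤ → Submodule R M) (k : ℤ) : Submodule R M :=
  ⨆ p : ℤ, 𝒞 (p, k - p)

/-- The part of second degree `q`, `⊕_p C^{p,q}`. -/
def brow (𝒞 : ℤ × ℤ → Submodule R M) (q : ℤ) : Submodule R M :=
  ⨆ p : ℤ, 𝒞 (p, q)

/-- The decreasing column filtration `F^p C = ⊕_{i ≥ p, j} C^{i,j}`. -/
def bfil (𝒞 : ℤ × ℤ → Submodule R M) (p : ℤ) : Submodule R M :=
  ⨆ (i : ℤ) (_ : p ≤ i) (j : ℤ), 𝒞 (i, j)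

lemma bcomp_add (𝒞 : ℤ × ℤ → Submodule R M) [DirectSum.Decomposition 𝒞] (p q : ℤ) (x y : M) :
    bcomp 𝒞 p q (x + y) = bcomp 𝒞 p q x + bcomp 𝒞 p q y := by
  simp [bcomp, DirectSum.decompose_add]

lemma bcomp_sub (𝒞 : ℤ × ℤ → Submodule R M) [DirectSum.Decomposition 𝒞] (p q : ℤ) (x y : M) :
    bcomp 𝒞 p q (x - y) = bcomp 𝒞 p q x - bcomp 𝒞 p q y := by
  simp [bcomp, DirectSum.decompose_sub]

lemma bcomp_zero (𝒞 : ℤ × ℤ → Submodule R M) [DirectSum.Decomposition 𝒞] (p q : ℤ) :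
    bcomp 𝒞 p q 0 = 0 := by
  simp [bcomp]

lemma bcomp_neg (𝒞 : ℤ × ℤ → Submodule R M) [DirectSum.Decomposition 𝒞] (p q : ℤ) (x : M) :
    bcomp 𝒞 p q (-x) = - bcomp 𝒞 p q x := by
  rw [show -x = 0 - x by abel, bcomp_sub, bcomp_zero, zero_sub]


/-- The key commutation lemma: a bidegree `(s,t)` map commutes with taking
bihomogeneous components, up to a shift. -/
lemma bcomp_map (𝒞 : ℤ × ℤ → Submodule R M) [DirectSum.Decomposition 𝒞]
    (T : M →ₗ[R] M) (s t : ℤ)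
    (hT : ∀ p q : ℤ, (𝒞 (p, q)).map T ≤ 𝒞 (p + s, q + t)) (p q : ℤ) (x : M) :
    bcomp 𝒞 p q (T x) = T (bcomp 𝒞 (p - s) (q - t) x) := by
  induction x using DirectSum.Decomposition.inductionOn 𝒞 with
  | zero => simp [bcomp_zero]
  | @homogeneous i m =>
    obtain ⟨a, b⟩ := i
    have hTm : T (m : M) ∈ 𝒞 (a + s, b + t) := hT a b ⟨(m : M), m.2, rfl⟩
    by_cases h : (p, q) = (a + s, b + t)
    · obtain ⟨hp, hq⟩ := Prod.mk.injEq .. ▸ h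
      subst hp; subst hq
      rw [bcomp, DirectSum.decompose_of_mem_same 𝒞 hTm]
      rw [bcomp]
      have : (a + s - s, b + t - t) = (a, b) := by simp
      rw [show a + s - s = a by ring, show b + t - t = b by ring,
        DirectSum.decompose_of_mem_same 𝒞 m.2]
    · rw [bcomp, DirectSum.decompose_of_mem_ne 𝒞 hTm (Ne.symm h)]
      have h' : (a, b) ≠ (p - s, q - t) := by
        intro hc
        apply h
        obtain ⟨h1, h2⟩ := Prod.mk.injEq .. ▸ hc
        rw [Prod.mk.injEq]
        omega
      rw [bcomp, DirectSum.decompose_of_mem_ne 𝒞 m.2 h', map_zero]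
  | add x y hx hy =>
    rw [map_add, bcomp_add, bcomp_add, hx, hy, map_add]

lemma bcomp_eq_zero_of_bot (𝒞 : ℤ × ℤ → Submodule R M) [DirectSum.Decomposition 𝒞]
    {p q : ℤ} (h : 𝒞 (p, q) = ⊥) (x : M) : bcomp 𝒞 p q x = 0 := by
  rw [bcomp]
  have hm : ((DirectSum.decompose 𝒞 x (p, q) : 𝒞 (p, q)) : M) ∈ 𝒞 (p, q) :=
    Submodule.coe_mem _
  exact (Submodule.eq_bot_iff _).mp h _ hm

lemma bcomp_bdeg (𝒞 : ℤ × ℤ → Submodule R M) [DirectSum.Decomposition 𝒞]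
    {k : ℤ} {x : M} (hx : x ∈ bdeg 𝒞 k) {p q : ℤ} (h : p + q ≠ k) :
    bcomp 𝒞 p q x = 0 := by
  refine Submodule.iSup_induction (motive := fun y => bcomp 𝒞 p q y = 0)
    (fun a => 𝒞 (a, k - a)) hx ?_ (bcomp_zero 𝒞 p q) ?_
  · intro a y hy
    have : (a, k - a) ≠ (p, q) := by
      intro hc
      obtain ⟨h1, h2⟩ := Prod.mk.injEq .. ▸ hc
      omega
    exact DirectSum.decompose_of_mem_ne 𝒞 hy this
  · intro x y hx hy
    rw [bcomp_add, hx, hy, add_zero]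

lemma decompose_coeLinearMap (𝒞 : ℤ × ℤ → Submodule R M) [DirectSum.Decomposition 𝒞]
    (w : ⨁ pq : ℤ × ℤ, 𝒞 pq) :
    DirectSum.decompose 𝒞 (DirectSum.coeLinearMap 𝒞 w) = w := by
  induction w using DirectSum.induction_on with
  | zero => simp
  | of i x => rw [DirectSum.coeLinearMap_of, DirectSum.decompose_coe]
  | add x y hx hy => rw [map_add, DirectSum.decompose_add, hx, hy]

lemma bcomp_eq_zero_of_bproj (𝒞 : ℤ × ℤ → Submodule R M) [DirectSum.Decomposition 𝒞]
    {z : M} (h : bproj 𝒞 1 z = 0) {p q : ℤ} (hq : 1 ≤ q) :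
    bcomp 𝒞 p q z = 0 := by
  have h0 : DFinsupp.filter (fun pq : ℤ × ℤ => 1 ≤ pq.2) (DirectSum.decompose 𝒞 z) = 0 := by
    have hdz : DirectSum.decompose 𝒞 (bproj 𝒞 1 z) = 0 := by
      rw [h, DirectSum.decompose_zero]
    rw [← hdz]
    rw [bproj]
    simp only [LinearMap.comp_apply, LinearEquiv.coe_coe,
      DirectSum.decomposeLinearEquiv_apply]
    rw [decompose_coeLinearMap]
    rfl
  have := congrFun (congrArg DFinsupp.toFun h0) (p, q)
  rw [bcomp]
  simp only [DFinsupp.toFun_eq_coe, DFinsupp.filter_apply] at this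
  rw [if_pos hq] at this
  rw [show DirectSum.decompose 𝒞 z (p, q) = 0 from this]
  rfl

theorem statement10
    (𝒞 : ℤ × ℤ → Submodule R M) [DirectSum.Decomposition 𝒞]
    (hfq : ∀ p q : ℤ, p < 0 ∨ q < 0 → 𝒞 (p, q) = ⊥)
    (D21 D10 D01 : M →ₗ[R] M)
    (h21 : ∀ p q : ℤ, (𝒞 (p, q)).map D21 ≤ 𝒞 (p + 2, q - 1))
    (h10 : ∀ p q : ℤ, (𝒞 (p, q)).map D10 ≤ 𝒞 (p + 1, q))
    (h01 : ∀ p q : ℤ, (𝒞 (p, q)).map D01 ≤ 𝒞 (p, q + 1))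
    (D : M →ₗ[R] M) (hDdef : D = D21 + D10 + D01) (hD : D ∘ₗ D = 0)
    (k : ℤ) (η : M) (hη : η ∈ bdeg 𝒞 k)
    (hπ : bproj 𝒞 1 (D η) = 0) :
    bcomp 𝒞 (k + 1) 0 (D η) =
      D21 (bcomp 𝒞 (k - 1) 1 η) + D10 (bcomp 𝒞 k 0 η) ∧
    D01 (D21 (bcomp 𝒞 (k - 1) 1 η) + D10 (bcomp 𝒞 k 0 η)) = 0 ∧
    D10 (D21 (bcomp 𝒞 (k - 1) 1 η) + D10 (bcomp 𝒞 k 0 η)) = 0 := by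
  have h21' : ∀ p q : ℤ, (𝒞 (p, q)).map D21 ≤ 𝒞 (p + 2, q + (-1)) := by
    intro p q; simpa [sub_eq_add_neg] using h21 p q
  have h10' : ∀ p q : ℤ, (𝒞 (p, q)).map D10 ≤ 𝒞 (p + 1, q + 0) := by
    intro p q; simpa using h10 p q
  have h01' : ∀ p q : ℤ, (𝒞 (p, q)).map D01 ≤ 𝒞 (p + 0, q + 1) := by
    intro p q; simpa using h01 p q
  have hb21 := bcomp_map 𝒞 D21 2 (-1) h21'
  have hb10 := bcomp_map 𝒞 D10 1 0 h10'
  have hb01' := bcomp_map 𝒞 D01 0 1 h01'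
  -- Part 1
  have part1 : bcomp 𝒞 (k + 1) 0 (D η) =
      D21 (bcomp 𝒞 (k - 1) 1 η) + D10 (bcomp 𝒞 k 0 η) := by
    rw [hDdef]
    simp only [LinearMap.add_apply]
    rw [bcomp_add, bcomp_add, hb21, hb10, hb01']
    rw [show k + 1 - 2 = k - 1 by ring, show (0 : ℤ) - (-1) = 1 by ring,
      show k + 1 - 1 = k by ring, show (0 : ℤ) - 0 = 0 by ring,
      show k + 1 - 0 = k + 1 by ring]
    rw [bcomp_eq_zero_of_bot 𝒞 (hfq (k + 1) (0 - 1) (Or.inr (by norm_num))) η, map_zero,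
      add_zero]
  refine ⟨part1, ?_, ?_⟩
  · -- D01 annihilates
    rw [← part1]
    have hDD : D (D η) = 0 := by
      have := congrFun (congrArg (fun f : M →ₗ[R] M => (f : M → M)) hD) η
      simpa using this
    have : D01 (bcomp 𝒞 (k + 1) 0 (D η)) = bcomp 𝒞 (k + 1) 1 (D01 (D η)) := by
      rw [hb01' (k + 1) 1 (D η)]
      norm_num
    rw [this]
    have hz : (D21 + D10 + D01) (D η) = 0 := by rw [← hDdef]; exact hDD
    have hsum : D21 (D η) + D10 (D η) + D01 (D η) = 0 := by
      simpa only [LinearMap.add_apply] using hz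
    have hsplit : D01 (D η) = - (D21 (D η) + D10 (D η)) :=
      eq_neg_of_add_eq_zero_right hsum
    rw [hsplit, bcomp_neg, bcomp_add, hb21, hb10]
    rw [show k + 1 - 2 = k - 1 by ring, show (1 : ℤ) - (-1) = 2 by ring,
      show k + 1 - 1 = k by ring, show (1 : ℤ) - 0 = 1 by ring]
    rw [bcomp_eq_zero_of_bproj 𝒞 hπ (by norm_num : (1:ℤ) ≤ 2),
      bcomp_eq_zero_of_bproj 𝒞 hπ (le_refl (1:ℤ))]
    simp
  · -- D10 annihilates
    rw [← part1]
    have hDD : D (D η) = 0 := by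
      have := congrFun (congrArg (fun f : M →ₗ[R] M => (f : M → M)) hD) η
      simpa using this
    have : D10 (bcomp 𝒞 (k + 1) 0 (D η)) = bcomp 𝒞 (k + 2) 0 (D10 (D η)) := by
      rw [hb10 (k + 2) 0 (D η)]
      norm_num
      rw [show k + 2 - 1 = k + 1 by ring]
    rw [this]
    have hz : (D21 + D10 + D01) (D η) = 0 := by rw [← hDdef]; exact hDD
    have hsum : D21 (D η) + D10 (D η) + D01 (D η) = 0 := by
      simpa only [LinearMap.add_apply] using hz
    have hsplit : D10 (D η) = - (D21 (D η) + D01 (D η)) := by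
      have h' : (D21 (D η) + D01 (D η)) + D10 (D η) = 0 := by
        rw [← hsum]; abel
      exact eq_neg_of_add_eq_zero_right h'
    rw [hsplit, bcomp_neg, bcomp_add, hb21, hb01']
    rw [show k + 2 - 2 = k by ring, show (0 : ℤ) - (-1) = 1 by ring,
      show k + 2 - 0 = k + 2 by ring, show (0 : ℤ) - 1 = -1 by ring]
    rw [bcomp_eq_zero_of_bproj 𝒞 hπ (le_refl (1:ℤ)),
      bcomp_eq_zero_of_bot 𝒞 (hfq (k + 2) (-1) (Or.inr (by norm_num)))]
    simp
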